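/- Let I be a nonzero ideal of R, f ∈ R nonzero, and m ≥ 1 an integer such that I^m is the principal ideal generated by f. Let g ∈ L satisfy g^m = f. Then g ∈ S, and the extension of I to S (the ideal of S generated by the image of I under the inclusion R → S) equals the principal ideal of S generated by g. -/

import Mathlib

open UniqueFactorizationMonoid in
/-- In a UFM with trivial units, taking `m`-th powers (`m ≠ 0`) is injective. -/
lemma pow_left_injective_of_uniqueUnits {M : Type*} [CommMonoidWithZero M]
    [UniqueFactorizationMonoid M] [Unique Mˣ] {m : ℕ} (hm : m ≠ 0)
    {x y : M} (h : x ^ m = y ^ m) : x = y := by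
  classical
  letI : NormalizationMonoid M := inferInstance
  rcases eq_or_ne x 0 with rfl | hx
  · rw [zero_pow hm] at h
    exact ((pow_eq_zero_iff hm).mp h.symm).symm
  rcases eq_or_ne y 0 with rfl | hy
  · rw [zero_pow hm] at h
    exact (pow_eq_zero_iff hm).mp h
  have hfx : normalizedFactors (x ^ m) = normalizedFactors (y ^ m) := by rw [h]
  rw [normalizedFactors_pow, normalizedFactors_pow] at hfx
  have hfac : normalizedFactors x = normalizedFactors y := by
    ext a
    have := congrArg (Multiset.count a) hfx
    rw [Multiset.count_nsmul, Multiset.count_nsmul] at this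
    exact Nat.eq_of_mul_eq_mul_left (Nat.pos_of_ne_zero hm) this
  have h1 := prod_normalizedFactors hx
  have h2 := prod_normalizedFactors hy
  rw [hfac] at h1
  exact associated_iff_eq.mp (h1.symm.trans h2)

/-- Let `R` be a Dedekind domain with fraction field `K`, `L` a finite
extension of `K`, and `S = integralClosure R L` (assumed Dedekind).  If `I` is a nonzero ideal
of `R`, `f ∈ R` is nonzero, `m ≥ 1`, `I ^ m = (f)`, and `g ∈ L` satisfies `g ^ m = f`, then
`g` is integral over `R` and the extension of `I` to `S` is the principal ideal generated by
`g`. -/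
theorem extended_ideal_eq_span_root
    (R : Type*) [CommRing R] [IsDomain R] [IsDedekindDomain R]
    (K L : Type*) [Field K] [Field L] [Algebra R K] [IsFractionRing R K]
    [Algebra K L] [Algebra R L] [IsScalarTower R K L] [FiniteDimensional K L]
    [IsDedekindDomain (integralClosure R L)]
    (I : Ideal R) (hI : I ≠ ⊥) (f : R) (hf : f ≠ 0)
    (m : ℕ) (hm : 1 ≤ m) (hIm : I ^ m = Ideal.span {f})
    (g : L) (hg : g ^ m = algebraMap R L f) :
    ∃ hgS : g ∈ integralClosure R L,
      Ideal.map (algebraMap R (integralClosure R L)) I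
        = Ideal.span {(⟨g, hgS⟩ : integralClosure R L)} := by
  have hm0 : m ≠ 0 := by omega
  have hgS : g ∈ integralClosure R L := by
    refine IsIntegral.of_pow (Nat.pos_of_ne_zero hm0) ?_
    rw [hg]
    exact isIntegral_algebraMap
  refine ⟨hgS, ?_⟩
  have hfS : algebraMap R (integralClosure R L) f = (⟨g, hgS⟩ : integralClosure R L) ^ m := by
    apply Subtype.ext
    rw [SubmonoidClass.coe_pow]
    exact hg.symm
  refine pow_left_injective_of_uniqueUnits hm0 ?_
  rw [← Ideal.map_pow, hIm, Ideal.map_span, Set.image_singleton, hfS,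
    ← Ideal.span_singleton_pow]
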